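/- Let α > 0 and λ ≥ 0. Then for every t > 0, the function t ↦ t E_{α,1}(−λ t^α) is differentiable at t and d/dt [t E_{α,1}(−λ t^α)] = E_{α,1}(−λ t^α) + E_{α,0}(−λ t^α), where E_{α,0}(z) = ∑_{k=1}^∞ z^k/Γ(kα). -/

import Mathlib

open Real Filter Set Topology

/-- The two-parameter Mittag-Leffler function (real arguments)
`E_{α,β}(z) = ∑_{k=0}^∞ z^k/Γ(αk+β)`. -/
noncomputable def mlReal (α β z : ℝ) : ℝ :=
  ∑' k : ℕ, z ^ k / Real.Gamma (α * k + β)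

/-- `E_{α,0}(z) = ∑_{k=1}^∞ z^k/Γ(kα)`. -/
noncomputable def mlZero (α z : ℝ) : ℝ :=
  ∑' k : ℕ, z ^ (k + 1) / Real.Gamma (((k : ℝ) + 1) * α)

private lemma gamma_lb {a x : ℝ} (ha0 : 0 < a) (ha1 : a ≤ 1) (hx : 1 ≤ x) :
    Real.Gamma x * (x + a - 1) ^ a ≤ Real.Gamma (x + a) := by
  have hu : 0 < x + a - 1 := by linarith
  have hx0 : 0 < x := by linarith
  have hGx := Real.Gamma_pos_of_pos hx0
  have hGu := Real.Gamma_pos_of_pos hu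
  have hrec : Real.Gamma (x + a) = (x + a - 1) * Real.Gamma (x + a - 1) := by
    have h := Real.Gamma_add_one hu.ne'
    rw [show x + a - 1 + 1 = x + a by ring] at h
    exact h
  have hGxa : 0 < Real.Gamma (x + a) := by rw [hrec]; exact mul_pos hu hGu
  have hc := Real.convexOn_log_Gamma.2 (show (x + a - 1) ∈ Ioi (0:ℝ) from hu)
      (show (x + a) ∈ Ioi (0:ℝ) by simp only [mem_Ioi]; linarith) ha0.le
      (by linarith : (0:ℝ) ≤ 1 - a) (by ring)
  simp only [Function.comp_apply, smul_eq_mul] at hc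
  rw [show a * (x + a - 1) + (1 - a) * (x + a) = x by ring] at hc
  have h2 : Real.log (Real.Gamma (x + a - 1))
      = Real.log (Real.Gamma (x + a)) - Real.log (x + a - 1) := by
    rw [hrec, Real.log_mul hu.ne' hGu.ne']; ring
  rw [h2] at hc
  have hlog : Real.log (Real.Gamma x) + a * Real.log (x + a - 1)
      ≤ Real.log (Real.Gamma (x + a)) := by ring_nf at hc ⊢; linarith
  have h3 := Real.exp_le_exp.2 hlog
  rwa [Real.exp_add, Real.exp_log hGx, Real.exp_log hGxa,
    show a * Real.log (x + a - 1) = Real.log (x + a - 1) * a from mul_comm _ _,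
    ← Real.rpow_def_of_pos hu] at h3

set_option maxHeartbeats 1000000 in
private lemma summable_aux {α : ℝ} (hα : 0 < α) {D : ℝ} (hD : 0 ≤ D) :
    Summable (fun k : ℕ => (α * k + 1) * D ^ k / Real.Gamma (α * k + 1)) := by
  set a := min α 1 with hadef
  have ha0 : 0 < a := lt_min hα one_pos
  have ha1 : a ≤ 1 := min_le_right _ _
  have haα : a ≤ α := min_le_left _ _
  refine summable_of_ratio_norm_eventually_le (r := 1/2) (by norm_num) ?_
  have hxt : Tendsto (fun k : ℕ => α * k + a) atTop atTop :=
    tendsto_atTop_add_const_right _ _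
      ((tendsto_natCast_atTop_atTop (R := ℝ)).const_mul_atTop hα)
  have h1 : ∀ᶠ k : ℕ in atTop, 2 * (1 + α) * (D + 1) ≤ (α * k + a) ^ a :=
    ((tendsto_rpow_atTop ha0).comp hxt).eventually_ge_atTop _
  have h2 : ∀ᶠ k : ℕ in atTop, (2:ℝ) ≤ α * k + 1 :=
    (tendsto_atTop_add_const_right _ _
      ((tendsto_natCast_atTop_atTop (R := ℝ)).const_mul_atTop hα)).eventually_ge_atTop _
  filter_upwards [h1, h2] with k hk1 hk2
  set x := α * (k:ℝ) + 1 with hxdef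
  have hx1 : (1:ℝ) ≤ x := by linarith
  have hx0 : (0:ℝ) < x := by linarith
  have hGx := Real.Gamma_pos_of_pos hx0
  have hGy := Real.Gamma_pos_of_pos (show (0:ℝ) < x + α by linarith)
  have hmono : Real.Gamma (x + a) ≤ Real.Gamma (x + α) := by
    rcases eq_or_lt_of_le haα with h | h
    · rw [h]
    · exact le_of_lt (Real.Gamma_strictMonoOn_Ici (by simp only [mem_Ici]; linarith)
        (by simp only [mem_Ici]; linarith) (by linarith))
  have hlb : Real.Gamma x * (x + a - 1) ^ a ≤ Real.Gamma (x + a) := gamma_lb ha0 ha1 hx1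
  have hC : 2 * (1 + α) * (D + 1) ≤ (x + a - 1) ^ a := by
    rw [show x + a - 1 = α * k + a by rw [hxdef]; ring]; exact hk1
  have hcast : α * ((k:ℕ)+1 : ℕ) + 1 = x + α := by push_cast; rw [hxdef]; ring
  rw [Real.norm_eq_abs, Real.norm_eq_abs, hcast,
    abs_of_nonneg (div_nonneg (by positivity) hGy.le),
    abs_of_nonneg (div_nonneg (by positivity) hGx.le)]
  rw [show (1:ℝ)/2 * (x * D ^ k / Real.Gamma x) = x * D ^ k / (2 * Real.Gamma x) by ring,
    div_le_div_iff₀ hGy (by positivity)]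
  calc (x + α) * D ^ (k+1) * (2 * Real.Gamma x)
      = ((x + α) * D * 2) * (D ^ k * Real.Gamma x) := by rw [pow_succ]; ring
    _ ≤ ((1 + α) * x * (D + 1) * 2) * (D ^ k * Real.Gamma x) := by
        apply mul_le_mul_of_nonneg_right _ (by positivity)
        nlinarith [mul_le_mul_of_nonneg_left hx1 (mul_nonneg hα.le hD), hx0, hD, hx1]
    _ = (x * D ^ k) * (Real.Gamma x * (2 * (1 + α) * (D + 1))) := by ring
    _ ≤ (x * D ^ k) * (Real.Gamma x * (x + a - 1) ^ a) :=
        mul_le_mul_of_nonneg_left (mul_le_mul_of_nonneg_left hC hGx.le) (by positivity)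
    _ ≤ (x * D ^ k) * Real.Gamma (x + a) := mul_le_mul_of_nonneg_left hlb (by positivity)
    _ ≤ x * D ^ k * Real.Gamma (x + α) := mul_le_mul_of_nonneg_left hmono (by positivity)

/-- For `α > 0`, `λ ≥ 0` and `t > 0`,
`d/dt [t E_{α,1}(-λ t^α)] = E_{α,1}(-λ t^α) + E_{α,0}(-λ t^α)`. -/
theorem hasDerivAt_t_mul_mittagLeffler (α lam : ℝ) (hα : 0 < α) (hlam : 0 ≤ lam)
    (t : ℝ) (ht : 0 < t) :
    HasDerivAt (fun s : ℝ => s * mlReal α 1 (-lam * s ^ α))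
      (mlReal α 1 (-lam * t ^ α) + mlZero α (-lam * t ^ α)) t := by
  have hM : (0:ℝ) < t + 1 := by linarith
  have htM : t < t + 1 := by linarith
  set M := t + 1 with hMdef
  set D := lam * M ^ α with hDdef
  have hD : 0 ≤ D := mul_nonneg hlam (Real.rpow_nonneg hM.le α)
  have hu : Summable (fun k : ℕ => (α * k + 1) * D ^ k / Real.Gamma (α * k + 1)) :=
    summable_aux hα hD
  have hGpos : ∀ k : ℕ, 0 < Real.Gamma (α * k + 1) := fun k =>
    Real.Gamma_pos_of_pos (by positivity)
  have hcoef : ∀ k : ℕ, (1:ℝ) ≤ α * k + 1 := fun k => by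
    have := mul_nonneg hα.le (Nat.cast_nonneg (α := ℝ) k); linarith
  have hMk : ∀ k : ℕ, M ^ (α * (k:ℝ)) = (M ^ α) ^ k := fun k => by
    rw [← Real.rpow_natCast (M ^ α) k, ← Real.rpow_mul hM.le]
  have htmem : t ∈ Ioo (0:ℝ) M := ⟨ht, htM⟩
  have hderiv : ∀ (k : ℕ) (y : ℝ), y ∈ Ioo (0:ℝ) M →
      HasDerivAt (fun y : ℝ => (-lam) ^ k / Real.Gamma (α * k + 1) * y ^ (α * k + 1))
        ((-lam) ^ k / Real.Gamma (α * k + 1) * ((α * k + 1) * y ^ (α * (k:ℝ)))) y := by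
    intro k y hy
    have h := Real.hasDerivAt_rpow_const (x := y) (p := α * k + 1) (Or.inl hy.1.ne')
    rw [show α * (k:ℝ) + 1 - 1 = α * (k:ℝ) by ring] at h
    exact h.const_mul _
  have hbound : ∀ (k : ℕ) (y : ℝ), y ∈ Ioo (0:ℝ) M →
      ‖(-lam) ^ k / Real.Gamma (α * k + 1) * ((α * k + 1) * y ^ (α * (k:ℝ)))‖
        ≤ (α * k + 1) * D ^ k / Real.Gamma (α * k + 1) := by
    intro k y hy
    have hyM : y ^ (α * (k:ℝ)) ≤ M ^ (α * (k:ℝ)) :=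
      Real.rpow_le_rpow hy.1.le hy.2.le (by positivity)
    have hynn : (0:ℝ) ≤ y ^ (α * (k:ℝ)) := Real.rpow_nonneg hy.1.le _
    rw [Real.norm_eq_abs, abs_mul, abs_div, abs_pow, abs_neg, abs_of_nonneg hlam,
      abs_of_pos (hGpos k), abs_of_nonneg (by positivity)]
    rw [show (α * k + 1) * D ^ k / Real.Gamma (α * k + 1)
        = lam ^ k / Real.Gamma (α * k + 1) * ((α * k + 1) * (M ^ α) ^ k) by
          rw [hDdef, mul_pow]; ring]
    apply mul_le_mul_of_nonneg_left _ (by positivity)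
    apply mul_le_mul_of_nonneg_left _ (by linarith [hcoef k])
    rw [← hMk k]; exact hyM
  have hg0 : Summable fun k : ℕ =>
      (-lam) ^ k / Real.Gamma (α * k + 1) * t ^ (α * k + 1) := by
    apply Summable.of_norm_bounded (hu.mul_left M)
    intro k
    rw [Real.norm_eq_abs, abs_mul, abs_div, abs_pow, abs_neg, abs_of_nonneg hlam,
      abs_of_pos (hGpos k), abs_of_nonneg (Real.rpow_nonneg ht.le _)]
    have ht1 : t ^ (α * (k:ℝ) + 1) ≤ M ^ (α * (k:ℝ)) * M := by
      rw [show M ^ (α * (k:ℝ)) * M = M ^ (α * (k:ℝ) + 1) by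
        rw [Real.rpow_add hM, Real.rpow_one]]
      exact Real.rpow_le_rpow ht.le htM.le (by positivity)
    calc lam ^ k / Real.Gamma (α * k + 1) * t ^ (α * (k:ℝ) + 1)
        ≤ lam ^ k / Real.Gamma (α * k + 1) * (M ^ (α * (k:ℝ)) * M) :=
          mul_le_mul_of_nonneg_left ht1 (by positivity)
      _ = M * (lam ^ k * (M ^ α) ^ k / Real.Gamma (α * k + 1)) := by rw [← hMk k]; ring
      _ ≤ M * ((α * k + 1) * D ^ k / Real.Gamma (α * k + 1)) := by
          apply mul_le_mul_of_nonneg_left _ hM.le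
          rw [hDdef, mul_pow]
          exact (div_le_div_iff_of_pos_right (hGpos k)).2
            (le_mul_of_one_le_left (by positivity) (hcoef k))
  have H : HasDerivAt
      (fun y : ℝ => ∑' k : ℕ, (-lam) ^ k / Real.Gamma (α * k + 1) * y ^ (α * k + 1))
      (∑' k : ℕ, (-lam) ^ k / Real.Gamma (α * k + 1) * ((α * k + 1) * t ^ (α * (k:ℝ)))) t :=
    hasDerivAt_tsum_of_isPreconnected hu isOpen_Ioo (convex_Ioo _ _).isPreconnected
      hderiv hbound htmem hg0 htmem
  have heq : (fun s : ℝ => s * mlReal α 1 (-lam * s ^ α)) =ᶠ[𝓝 t]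
      fun y : ℝ => ∑' k : ℕ, (-lam) ^ k / Real.Gamma (α * k + 1) * y ^ (α * k + 1) := by
    filter_upwards [isOpen_Ioo.mem_nhds htmem] with y hy
    have hy0 : (0:ℝ) < y := hy.1
    rw [mlReal, ← tsum_mul_left]
    refine tsum_congr fun k => ?_
    have h1 : (y ^ α) ^ k = y ^ (α * (k:ℝ)) := by
      rw [← Real.rpow_natCast (y ^ α) k, ← Real.rpow_mul hy0.le]
    have h2 : y ^ (α * (k:ℝ) + 1) = y ^ (α * (k:ℝ)) * y := by
      rw [Real.rpow_add hy0, Real.rpow_one]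
    rw [mul_pow, h1, h2]; ring
  have H2 : HasDerivAt (fun s : ℝ => s * mlReal α 1 (-lam * s ^ α))
      (∑' k : ℕ, (-lam) ^ k / Real.Gamma (α * k + 1) * ((α * k + 1) * t ^ (α * (k:ℝ)))) t :=
    H.congr_of_eventuallyEq heq
  set z := -lam * t ^ α with hzdef
  have hzD : |z| ≤ D := by
    rw [hzdef, hDdef, abs_mul, abs_neg, abs_of_nonneg hlam,
      abs_of_nonneg (Real.rpow_nonneg ht.le α)]
    exact mul_le_mul_of_nonneg_left (Real.rpow_le_rpow ht.le htM.le hα.le) hlam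
  have hzk : ∀ k : ℕ, z ^ k = (-lam) ^ k * t ^ (α * (k:ℝ)) := fun k => by
    rw [hzdef, mul_pow, ← Real.rpow_natCast (t ^ α) k, ← Real.rpow_mul ht.le]
  have hzDk : ∀ k : ℕ, |z| ^ k ≤ D ^ k := fun k => pow_le_pow_left₀ (abs_nonneg z) hzD k
  have hA : Summable fun k : ℕ => z ^ k / Real.Gamma (α * k + 1) := by
    apply Summable.of_norm_bounded hu
    intro k
    rw [Real.norm_eq_abs, abs_div, abs_pow, abs_of_pos (hGpos k)]
    calc |z| ^ k / Real.Gamma (α * k + 1) ≤ D ^ k / Real.Gamma (α * k + 1) :=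
          (div_le_div_iff_of_pos_right (hGpos k)).2 (hzDk k)
      _ ≤ (α * k + 1) * D ^ k / Real.Gamma (α * k + 1) :=
          (div_le_div_iff_of_pos_right (hGpos k)).2 (le_mul_of_one_le_left (by positivity) (hcoef k))
  have hB : Summable fun k : ℕ => z ^ k * (α * k) / Real.Gamma (α * k + 1) := by
    apply Summable.of_norm_bounded hu
    intro k
    rw [Real.norm_eq_abs, abs_div, abs_mul, abs_pow, abs_of_pos (hGpos k),
      abs_of_nonneg (by positivity : (0:ℝ) ≤ α * k)]
    apply (div_le_div_iff_of_pos_right (hGpos k)).2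
    calc |z| ^ k * (α * k) ≤ D ^ k * (α * k) :=
          mul_le_mul_of_nonneg_right (hzDk k) (by positivity)
      _ ≤ (α * k + 1) * D ^ k := by nlinarith [pow_nonneg hD k]
  have hval : (∑' k : ℕ, (-lam) ^ k / Real.Gamma (α * k + 1)
        * ((α * k + 1) * t ^ (α * (k:ℝ))))
      = mlReal α 1 z + mlZero α z := by
    have hgt : ∀ k : ℕ, (-lam) ^ k / Real.Gamma (α * k + 1) * ((α * k + 1) * t ^ (α * (k:ℝ)))
        = z ^ k / Real.Gamma (α * k + 1) + z ^ k * (α * k) / Real.Gamma (α * k + 1) := by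
      intro k
      rw [hzk k]; ring
    rw [tsum_congr hgt, Summable.tsum_add hA hB]
    congr 1
    rw [Summable.tsum_eq_zero_add hB]
    have hB0 : z ^ 0 * (α * (0:ℕ)) / Real.Gamma (α * (0:ℕ) + 1) = 0 := by
      simp
    rw [hB0, zero_add, mlZero]
    refine tsum_congr fun k => ?_
    have hc : (0:ℝ) < α * ((k:ℝ) + 1) := by positivity
    push_cast
    rw [show α * ((k:ℝ) + 1) + 1 = α * ((k:ℝ) + 1) + 1 from rfl]
    rw [Real.Gamma_add_one hc.ne']
    rw [show z ^ (k+1) * (α * ((k:ℝ) + 1)) = (α * ((k:ℝ) + 1)) * z ^ (k+1) from mul_comm _ _,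
      mul_div_mul_left _ _ hc.ne', mul_comm α ((k:ℝ) + 1)]
  rw [hval] at H2
  exact H2
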